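/- arXiv:2305.17447 — 2 statements merged into one kernel-verified Lean document; each statement's English description precedes it below -/
import Mathlib

section
/- Let f : ℝ³ → [0,∞) be measurable with n = ∫_{ℝ³} f dv > 0 and ∫_{ℝ³} (1+f) log(1+f) dv ≤ C₀ < ∞. Then for every u ∈ ℝ³ and λ > 0, ∫_{{|v−u| ≤ λ}} f dv ≤ μ C₀ + (4π/3) μ e^{1/μ} λ³ for every μ > 0. -/
open MeasureTheory

/-- Pointwise Fenchel–Young type inequality:
for `x ≥ 0` and `μ > 0`, `x ≤ μ (1+x) log(1+x) + μ e^{1/μ}`. -/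
lemma stmt_10_aux (x μ : ℝ) (hx : 0 ≤ x) (hμ : 0 < μ) :
    x ≤ μ * ((1 + x) * Real.log (1 + x)) + μ * Real.exp (1 / μ) := by
  set a : ℝ := 1 + x with ha
  have ha1 : (1:ℝ) ≤ a := by simp [ha, hx]
  have ha0 : 0 < a := lt_of_lt_of_le one_pos ha1
  -- exp (1/μ) ≥ a * (1 + (1/μ - log a)) = a + a/μ - a log a
  have key : a + a * (1/μ) - a * Real.log a ≤ Real.exp (1/μ) := by
    have h1 : Real.exp (1/μ) = a * Real.exp (1/μ - Real.log a) := by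
      rw [Real.exp_sub, Real.exp_log ha0]; field_simp
    have h2 : 1 + (1/μ - Real.log a) ≤ Real.exp (1/μ - Real.log a) := by
      linarith [Real.add_one_le_exp (1/μ - Real.log a)]
    calc a + a * (1/μ) - a * Real.log a = a * (1 + (1/μ - Real.log a)) := by ring
      _ ≤ a * Real.exp (1/μ - Real.log a) := by
          exact mul_le_mul_of_nonneg_left h2 ha0.le
      _ = Real.exp (1/μ) := h1.symm
  -- multiply by μ
  have h4 : a * (1/μ) ≤ a * Real.log a - a + Real.exp (1/μ) := by linarith
  have h5 : μ * (a * (1/μ)) ≤ μ * (a * Real.log a - a + Real.exp (1/μ)) :=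
    mul_le_mul_of_nonneg_left h4 hμ.le
  have hid : μ * (a * (1/μ)) = a := by field_simp
  have hμa : 0 < μ * a := mul_pos hμ ha0
  nlinarith [h5, hid, hμa]

/-- Entropy bound on the mass in a ball:
`∫_{|v−u|≤λ} f dv ≤ μ C₀ + (4π/3) μ e^{1/μ} λ³` for every `μ > 0`. -/
theorem stmt_10 (f : EuclideanSpace ℝ (Fin 3) → ℝ) (C₀ : ℝ)
    (hfmeas : Measurable f) (hfnonneg : ∀ v, 0 ≤ f v)
    (hfint : Integrable f) (hn : 0 < ∫ v, f v)
    (hent_int : Integrable (fun v => (1 + f v) * Real.log (1 + f v)))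
    (hent : ∫ v, (1 + f v) * Real.log (1 + f v) ≤ C₀)
    (u : EuclideanSpace ℝ (Fin 3)) (lam : ℝ) (hlam : 0 < lam)
    (μ : ℝ) (hμ : 0 < μ) :
    ∫ v in {v : EuclideanSpace ℝ (Fin 3) | ‖v - u‖ ≤ lam}, f v
      ≤ μ * C₀ + (4 * Real.pi / 3) * μ * Real.exp (1 / μ) * lam ^ 3 := by
  have hset : {v : EuclideanSpace ℝ (Fin 3) | ‖v - u‖ ≤ lam} = Metric.closedBall u lam := by
    ext v; simp [Metric.mem_closedBall, dist_eq_norm]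
  rw [hset]
  set S := Metric.closedBall u lam with hS
  have hSmeas : MeasurableSet S := measurableSet_closedBall
  have hSvol : (volume S).toReal = 4 * Real.pi / 3 * lam ^ 3 := by
    rw [hS, EuclideanSpace.volume_closedBall, Fintype.card_fin]
    have hg : Real.Gamma ((3:ℝ) / 2 + 1) = 3 / 4 * Real.sqrt Real.pi := by
      rw [Real.Gamma_add_one (by norm_num)]
      have : (3:ℝ)/2 = 1/2 + 1 := by norm_num
      rw [this, Real.Gamma_add_one (by norm_num), Real.Gamma_one_half_eq]
      ring
    push_cast
    rw [hg]
    rw [ENNReal.toReal_mul, ENNReal.toReal_pow, ENNReal.toReal_ofReal hlam.le,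
      ENNReal.toReal_ofReal (by positivity)]
    have hπ := Real.pi_pos
    have hs : Real.sqrt Real.pi ^ 3 = Real.pi * Real.sqrt Real.pi := by
      rw [pow_succ, Real.sq_sqrt hπ.le]
    rw [hs]
    field_simp
  have hSfin : volume S ≠ ⊤ := (measure_closedBall_lt_top).ne
  -- entropy is nonnegative
  have hent_nonneg : ∀ v, 0 ≤ (1 + f v) * Real.log (1 + f v) := fun v =>
    mul_nonneg (by linarith [hfnonneg v])
      (Real.log_nonneg (by linarith [hfnonneg v]))
  -- pointwise bound
  have hptwise : ∀ v ∈ S, f v ≤ μ * ((1 + f v) * Real.log (1 + f v)) + μ * Real.exp (1 / μ) :=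
    fun v _ => stmt_10_aux (f v) μ (hfnonneg v) hμ
  -- integrability of RHS on S
  have hRHSint : IntegrableOn
      (fun v => μ * ((1 + f v) * Real.log (1 + f v)) + μ * Real.exp (1 / μ)) S volume := by
    apply Integrable.add
    · exact (hent_int.const_mul μ).integrableOn
    · exact (integrableOn_const_iff).mpr (Or.inr (lt_top_iff_ne_top.mpr hSfin))
  have step1 : ∫ v in S, f v ≤
      ∫ v in S, (μ * ((1 + f v) * Real.log (1 + f v)) + μ * Real.exp (1 / μ)) :=
    setIntegral_mono_on hfint.integrableOn hRHSint hSmeas hptwise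
  have step2 : ∫ v in S, (μ * ((1 + f v) * Real.log (1 + f v)) + μ * Real.exp (1 / μ))
      = μ * (∫ v in S, (1 + f v) * Real.log (1 + f v)) + μ * Real.exp (1 / μ) * (volume S).toReal := by
    rw [integral_add ((hent_int.const_mul μ).integrableOn)
      ((integrableOn_const_iff).mpr (Or.inr (lt_top_iff_ne_top.mpr hSfin))),
      integral_const, integral_const_mul]
    simp [smul_eq_mul, Measure.real]
    ring
  have step3 : ∫ v in S, (1 + f v) * Real.log (1 + f v) ≤ C₀ := by
    refine le_trans ?_ hent
    exact setIntegral_le_integral hent_int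
      (Filter.Eventually.of_forall hent_nonneg)
  calc ∫ v in S, f v
      ≤ μ * (∫ v in S, (1 + f v) * Real.log (1 + f v)) + μ * Real.exp (1 / μ) * (volume S).toReal := by
        rw [← step2]; exact step1
    _ ≤ μ * C₀ + μ * Real.exp (1 / μ) * (volume S).toReal := by
        have := mul_le_mul_of_nonneg_left step3 hμ.le
        linarith
    _ = μ * C₀ + (4 * Real.pi / 3) * μ * Real.exp (1 / μ) * lam ^ 3 := by
        rw [hSvol]; ring
end

section
/- Let f : ℝ³ → [0,∞) satisfy ∫_{ℝ³} f dv = n > 0, ∫_{ℝ³} (1+f)log(1+f) dv ≤ C₀, and ∫_{ℝ³} f(v)|v−u|² dv < ∞ for some u ∈ ℝ³. Then there exists a constant c > 0 depending only on n and C₀ (and not on f or u) such that ∫_{ℝ³} f(v)|v−u|² dv ≥ c. -/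
open MeasureTheory

/-- Pointwise bound: for `t ≥ 0` and `m > 0`, `t ≤ m (1+t) log(1+t) + e^{1/m}`. -/
lemma pointwise_entropy_bound {t m : ℝ} (ht : 0 ≤ t) (hm : 0 < m) :
    t ≤ m * ((1 + t) * Real.log (1 + t)) + Real.exp (1 / m) := by
  have hlog0 : 0 ≤ Real.log (1 + t) := Real.log_nonneg (by linarith)
  rcases le_or_gt t (Real.exp (1 / m)) with h | h
  · nlinarith [mul_nonneg hm.le (mul_nonneg (by linarith : (0:ℝ) ≤ 1 + t) hlog0)]
  · have h1 : Real.exp (1 / m) < 1 + t := by linarith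
    have h2 : 1 / m ≤ Real.log (1 + t) := by
      rw [Real.le_log_iff_exp_le (by positivity)]
      exact h1.le
    have h3 : (1 + t) * (1 / m) ≤ (1 + t) * Real.log (1 + t) :=
      mul_le_mul_of_nonneg_left h2 (by linarith)
    have h4 : m * ((1 + t) * (1 / m)) = 1 + t := by field_simp
    have h5 : m * ((1 + t) * (1 / m)) ≤ m * ((1 + t) * Real.log (1 + t)) :=
      mul_le_mul_of_nonneg_left h3 hm.le
    have := (Real.exp_pos (1 / m)).le
    linarith [h4 ▸ h5]

/-- Uniform positive lower bound on the (unnormalized) temperature: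
there is `c > 0` depending only on `n` and `C₀` such that for every `f` with
mass `n`, entropy bounded by `C₀`, and finite second moment about any `u`,
`∫ f |v−u|² dv ≥ c`. -/
theorem stmt_11 (n C₀ : ℝ) (hn : 0 < n) :
    ∃ c : ℝ, 0 < c ∧
      ∀ (f : EuclideanSpace ℝ (Fin 3) → ℝ) (u : EuclideanSpace ℝ (Fin 3)),
        Measurable f → (∀ v, 0 ≤ f v) → Integrable f → (∫ v, f v) = n →
        Integrable (fun v => (1 + f v) * Real.log (1 + f v)) →
        (∫ v, (1 + f v) * Real.log (1 + f v)) ≤ C₀ →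
        Integrable (fun v => f v * ‖v - u‖ ^ 2) →
        c ≤ ∫ v, f v * ‖v - u‖ ^ 2 := by
  classical
  set C' : ℝ := max C₀ 0 with hC'def
  have hC'0 : 0 ≤ C' := le_max_right _ _
  set m : ℝ := n / (4 * (C' + 1)) with hmdef
  have hm0 : 0 < m := by positivity
  set K : ℝ := Real.exp (1 / m) with hKdef
  have hK0 : 0 < K := Real.exp_pos _
  set V : ℝ := (volume (Metric.ball (0 : EuclideanSpace ℝ (Fin 3)) 1)).toReal with hVdef
  have hV0 : 0 ≤ V := ENNReal.toReal_nonneg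
  have hx0 : 0 < n / (4 * K * (V + 1)) := by positivity
  set lam : ℝ := (n / (4 * K * (V + 1))) ^ ((1 : ℝ) / 3) with hlamdef
  have hlam0 : 0 < lam := Real.rpow_pos_of_pos hx0 _
  have hlam3 : lam ^ (3 : ℕ) = n / (4 * K * (V + 1)) := by
    rw [hlamdef, ← Real.rpow_natCast (_ ^ _) 3, ← Real.rpow_mul hx0.le]
    norm_num
  refine ⟨lam ^ 2 * (n / 2), by positivity, ?_⟩
  intro f u hfm hf0 hfi hfn hgi hgC hf2i
  set g : EuclideanSpace ℝ (Fin 3) → ℝ := fun v => (1 + f v) * Real.log (1 + f v) with hgdef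
  have hg0 : ∀ v, 0 ≤ g v := fun v =>
    mul_nonneg (by linarith [hf0 v]) (Real.log_nonneg (by linarith [hf0 v]))
  set B := Metric.ball u lam with hBdef
  have hBm : MeasurableSet B := measurableSet_ball
  have hBfin : volume B < ⊤ := measure_ball_lt_top
  have hBvol : (volume B).toReal = lam ^ (3 : ℕ) * V := by
    have h := Measure.addHaar_ball (volume : Measure (EuclideanSpace ℝ (Fin 3))) u hlam0.le
    rw [hBdef, h, finrank_euclideanSpace_fin, ENNReal.toReal_mul,
      ENNReal.toReal_ofReal (by positivity)]
  -- entropy bound on the ball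
  have hball : ∫ v in B, f v ≤ n / 2 := by
    have hmono : ∫ v in B, f v ≤ ∫ v in B, (m * g v + K) := by
      refine setIntegral_mono_on hfi.integrableOn ?_ hBm ?_
      · exact (hgi.const_mul m).integrableOn.add
          ((integrableOn_const_iff (C := K)).mpr (Or.inr hBfin))
      · intro v _
        exact pointwise_entropy_bound (hf0 v) hm0
    have hsplit : ∫ v in B, (m * g v + K) = m * (∫ v in B, g v) + (volume B).toReal * K := by
      rw [integral_add (hgi.const_mul m).integrableOn ((integrableOn_const_iff (C := K)).mpr (Or.inr hBfin)),
        integral_const_mul, setIntegral_const, smul_eq_mul, measureReal_def]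
    have hgle : ∫ v in B, g v ≤ C' := by
      calc ∫ v in B, g v ≤ ∫ v, g v :=
            setIntegral_le_integral hgi (Filter.Eventually.of_forall hg0)
        _ ≤ C₀ := hgC
        _ ≤ C' := le_max_left _ _
    have h1 : m * (∫ v in B, g v) ≤ n / 4 := by
      calc m * (∫ v in B, g v) ≤ m * C' := mul_le_mul_of_nonneg_left hgle hm0.le
        _ ≤ m * (C' + 1) := mul_le_mul_of_nonneg_left (by linarith) hm0.le
        _ = n / 4 := by rw [hmdef]; field_simp
    have h2 : (volume B).toReal * K ≤ n / 4 := by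
      rw [hBvol, hlam3]
      have heq : n / (4 * K * (V + 1)) * V * K = n * V / (4 * (V + 1)) := by
        field_simp
      rw [heq, div_le_div_iff₀ (by positivity) (by norm_num)]
      nlinarith
    linarith
  -- tail bound
  have htail : ∫ v in Bᶜ, f v = n - ∫ v in B, f v := by
    have := integral_add_compl hBm hfi
    rw [hfn] at this
    linarith
  have hstep1 : lam ^ 2 * (n / 2) ≤ lam ^ 2 * (∫ v in Bᶜ, f v) := by
    apply mul_le_mul_of_nonneg_left _ (by positivity)
    rw [htail]; linarith
  have hstep2 : lam ^ 2 * (∫ v in Bᶜ, f v) ≤ ∫ v in Bᶜ, f v * ‖v - u‖ ^ 2 := by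
    rw [← integral_const_mul]
    refine setIntegral_mono_on (hfi.const_mul _).integrableOn hf2i.integrableOn
      hBm.compl ?_
    intro v hv
    have hdist : lam ≤ ‖v - u‖ := by
      have : ¬ dist v u < lam := by simpa [hBdef, Metric.mem_ball] using hv
      rw [dist_eq_norm] at this
      linarith [not_lt.mp this]
    have : lam ^ 2 ≤ ‖v - u‖ ^ 2 := by nlinarith [hlam0.le]
    nlinarith [hf0 v, hf0 v]
  have hstep3 : ∫ v in Bᶜ, f v * ‖v - u‖ ^ 2 ≤ ∫ v, f v * ‖v - u‖ ^ 2 :=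
    setIntegral_le_integral hf2i (Filter.Eventually.of_forall fun v =>
      mul_nonneg (hf0 v) (by positivity))
  linarith
end
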